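/- Let d ≥ 1, ε > 0, and x₁, x₂, x₃ ∈ ℝ^d (Euclidean space). Let y₁, y₂, y₃ ∈ ℝ^d satisfy ‖y₂ − y₁‖ = ‖x₂ − x₁‖, ‖y₃ − y₂‖ = ‖x₃ − x₂‖, and y₂ ∈ [y₁, y₃] (so y₁, y₂, y₃ are aligned, in this order). Then, with volume denoting the Lebesgue measure on ℝ^d, [a,b] the closed segment between a and b, and A + B the Minkowski sum, volume(([x₁,x₂] ∪ [x₂,x₃]) + closedBall(0,ε)) ≤ volume(([y₁,y₂] ∪ [y₂,y₃]) + closedBall(0,ε)). In other words, the Lebesgue measure of the twisted tube (the ε-neighbourhood of the broken line through x₁, x₂, x₃) is maximal when the three points are aligned and in this order. -/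

import Mathlib

open MeasureTheory Metric
open scoped Pointwise RealInnerProductSpace

namespace TwistedTubeAux

variable {d : ℕ}

local notation "E" => EuclideanSpace ℝ (Fin d)

lemma isCompact_segment' (a b : E) : IsCompact (segment ℝ a b) := by
  rw [segment_eq_image']
  exact isCompact_Icc.image (by fun_prop)

lemma vol_singleton_add (a : E) (s : Set E) : volume ({a} + s) = volume s := by
  rw [Set.singleton_add, Set.image_add_left, measure_preimage_add]

lemma stadium_translate (ε : ℝ) (a b : E) :
    volume (segment ℝ a b + closedBall 0 ε)
      = volume (segment ℝ 0 (b - a) + closedBall (0:E) ε) := by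
  have h1 : segment ℝ a b = {a} + segment ℝ 0 (b - a) := by
    rw [Set.singleton_add, segment_translate_image]
    simp
  rw [h1, add_assoc, vol_singleton_add]

lemma stadium_rot (ε : ℝ) (u v : E) (h : ‖u‖ = ‖v‖) :
    volume (segment ℝ 0 u + closedBall 0 ε)
      = volume (segment ℝ 0 v + closedBall (0:E) ε) := by
  set f := Submodule.reflection (ℝ ∙ (u - v))ᗮ with hfdef
  have hfu : f u = v := Submodule.reflection_sub h
  have himg : f '' (segment ℝ 0 u + closedBall 0 ε)
      = segment ℝ 0 v + closedBall (0:E) ε := by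
    have hcoe : (f : E → E) = (f.toLinearEquiv.toLinearMap : E → E) := rfl
    rw [hcoe, Set.image_add (f.toLinearEquiv.toLinearMap)]
    congr 1
    · have := image_segment ℝ f.toLinearEquiv.toLinearMap.toAffineMap (0:E) u
      simpa [hfu] using this
    · have := f.toIsometryEquiv.image_closedBall (0:E) ε
      simpa using this
  have hms : MeasurableSet (segment ℝ 0 v + closedBall (0:E) ε) :=
    ((isCompact_segment' 0 v).add (isCompact_closedBall _ _)).measurableSet
  have hpre : segment ℝ 0 u + closedBall (0:E) ε
      = f ⁻¹' (segment ℝ 0 v + closedBall (0:E) ε) := by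
    rw [← himg, Set.preimage_image_eq _ f.injective]
  rw [hpre, f.measurePreserving.measure_preimage hms.nullMeasurableSet]

lemma stadium_vol (ε : ℝ) (u₁ u₂ v₁ v₂ : E) (h : ‖u₂ - u₁‖ = ‖v₂ - v₁‖) :
    volume (segment ℝ u₁ u₂ + closedBall 0 ε)
      = volume (segment ℝ v₁ v₂ + closedBall (0:E) ε) := by
  rw [stadium_translate, stadium_translate ε v₁ v₂, stadium_rot ε _ _ h]

lemma real_aux (a c i1 i3 : ℝ) (ha : 0 ≤ a) (hc : 0 ≤ c) (hac : a + c = 1)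
    (hsum : a * i1 + c * i3 = 0) (h1 : 0 < i1) : i3 ≤ 0 := by
  by_contra hcon
  push_neg at hcon
  have ha0 : a = 0 := by
    have hprod : a * i1 = 0 := by
      nlinarith [mul_nonneg ha h1.le, mul_nonneg hc hcon.le]
    rcases mul_eq_zero.mp hprod with h' | h'
    · exact h'
    · linarith
  have hc0 : c = 0 := by
    have hprod : c * i3 = 0 := by
      nlinarith [mul_nonneg ha h1.le, mul_nonneg hc hcon.le]
    rcases mul_eq_zero.mp hprod with h' | h'
    · exact h'
    · linarith
  linarith

lemma norm_le_norm_sub_smul (u v : E) (s : ℝ) (hs : 0 ≤ s) (hiv : ⟪u, v⟫ ≤ 0) :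
    ‖u‖ ≤ ‖u - s • v‖ := by
  have h1 : ‖u - s • v‖ ^ 2 = ‖u‖ ^ 2 - 2 * (s * ⟪u, v⟫) + ‖s • v‖ ^ 2 := by
    rw [← real_inner_smul_right]
    exact norm_sub_sq_real u (s • v)
  nlinarith [norm_nonneg u, norm_nonneg (u - s • v), norm_nonneg (s • v),
    mul_nonneg hs (neg_nonneg.2 hiv)]

/-- In the aligned case, the intersection of the two stadiums is contained in the ball. -/
lemma inter_subset_ball (ε : ℝ) (y₁ y₂ y₃ : E) (hy : y₂ ∈ segment ℝ y₁ y₃) :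
    (segment ℝ y₁ y₂ + closedBall 0 ε) ∩ (segment ℝ y₂ y₃ + closedBall (0:E) ε)
      ⊆ closedBall y₂ ε := by
  rintro z ⟨⟨p, hp, b₁, hb₁, rfl⟩, q, hq, b₂, hb₂, hz⟩
  obtain ⟨s, hs0, hp'⟩ : ∃ s : ℝ, 0 ≤ s ∧ p = y₂ + s • (y₁ - y₂) := by
    obtain ⟨a, c, ha, hc, hac, rfl⟩ := hp
    refine ⟨a, ha, ?_⟩
    have hc' : c = 1 - a := by linarith
    subst hc'; module
  obtain ⟨t, ht0, hq'⟩ : ∃ t : ℝ, 0 ≤ t ∧ q = y₂ + t • (y₃ - y₂) := by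
    obtain ⟨a, c, ha, hc, hac, rfl⟩ := hq
    refine ⟨c, hc, ?_⟩
    have ha' : a = 1 - c := by linarith
    subst ha'; module
  obtain ⟨a, c, ha, hc, hac, hy'⟩ := hy
  have hvanish : a • (y₁ - y₂) + c • (y₃ - y₂) = 0 := by
    have step : a • (y₁ - y₂) + c • (y₃ - y₂) = (a • y₁ + c • y₃) - (a + c) • y₂ := by
      module
    rw [step, hy', hac, one_smul, sub_self]
  have hz' : y₂ + t • (y₃ - y₂) + b₂ = y₂ + s • (y₁ - y₂) + b₁ := by
    rw [← hp', ← hq']; exact hz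
  set u := s • (y₁ - y₂) + b₁ with hu
  have hb1 : ‖b₁‖ ≤ ε := mem_closedBall_zero_iff.mp hb₁
  have hb2 : ‖b₂‖ ≤ ε := mem_closedBall_zero_iff.mp hb₂
  have hub1 : u - s • (y₁ - y₂) = b₁ := by rw [hu]; abel
  have hub2 : u - t • (y₃ - y₂) = b₂ := by
    have hb₂' : b₂ = y₂ + s • (y₁ - y₂) + b₁ - (y₂ + t • (y₃ - y₂)) := by
      rw [← hz']; abel
    rw [hu, hb₂']; abel
  have hinner : a * ⟪u, y₁ - y₂⟫ + c * ⟪u, y₃ - y₂⟫ = 0 := by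
    rw [← real_inner_smul_right, ← real_inner_smul_right, ← inner_add_right, hvanish,
      inner_zero_right]
  have hgoal : p + b₁ - y₂ = u := by rw [hu, hp']; abel
  show p + b₁ ∈ closedBall y₂ ε
  rw [mem_closedBall, dist_eq_norm, hgoal]
  rcases le_or_gt ⟪u, y₁ - y₂⟫ 0 with hneg | hpos
  · calc ‖u‖ ≤ ‖u - s • (y₁ - y₂)‖ := norm_le_norm_sub_smul _ _ _ hs0 hneg
      _ = ‖b₁‖ := by rw [hub1]
      _ ≤ ε := hb1
  · have hneg3 : ⟪u, y₃ - y₂⟫ ≤ 0 := real_aux a c _ _ ha hc hac hinner hpos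
    calc ‖u‖ ≤ ‖u - t • (y₃ - y₂)‖ := norm_le_norm_sub_smul _ _ _ ht0 hneg3
      _ = ‖b₂‖ := by rw [hub2]
      _ ≤ ε := hb2

lemma ball_subset_stadium (ε : ℝ) (a b w : E) (hw : w ∈ segment ℝ a b) :
    closedBall w ε ⊆ segment ℝ a b + closedBall (0:E) ε := by
  intro z hz
  have hzw : z = w + (z - w) := by module
  rw [hzw]
  exact Set.add_mem_add hw (by
    rw [mem_closedBall_zero_iff]
    simpa [dist_eq_norm] using mem_closedBall.mp hz)

lemma closedBall_eq_singleton_add (w : E) (ε : ℝ) :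
    closedBall w ε = {w} + closedBall (0:E) ε := by
  ext z
  constructor
  · intro hz
    refine ⟨w, rfl, z - w, ?_, by module⟩
    rw [mem_closedBall_zero_iff]
    simpa [dist_eq_norm] using mem_closedBall.mp hz
  · rintro ⟨a, ha, b, hb, rfl⟩
    rw [Set.mem_singleton_iff] at ha; subst ha
    rw [mem_closedBall_zero_iff] at hb
    show a + b ∈ closedBall a ε
    rw [mem_closedBall, dist_eq_norm]
    simpa using hb

lemma vol_closedBall_eq (w : E) (ε : ℝ) :
    volume (closedBall w ε) = volume (closedBall (0:E) ε) := by
  rw [closedBall_eq_singleton_add, vol_singleton_add]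

end TwistedTubeAux

open TwistedTubeAux in
/-- The measure of a twisted tube is maximal when the three points are aligned, in this order:
if `‖y₂−y₁‖ = ‖x₂−x₁‖`, `‖y₃−y₂‖ = ‖x₃−x₂‖` and `y₂` lies on the segment `[y₁,y₃]`, then the
`ε`-neighbourhood of the broken line through `x₁,x₂,x₃` has measure at most that of the
`ε`-neighbourhood of the broken line through `y₁,y₂,y₃`. -/
theorem twisted_tube_measure_le (d : ℕ) (hd : 1 ≤ d) (ε : ℝ) (hε : 0 < ε)
    (x₁ x₂ x₃ y₁ y₂ y₃ : EuclideanSpace ℝ (Fin d))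
    (h₁ : ‖y₂ - y₁‖ = ‖x₂ - x₁‖) (h₂ : ‖y₃ - y₂‖ = ‖x₃ - x₂‖)
    (hy : y₂ ∈ segment ℝ y₁ y₃) :
    volume ((segment ℝ x₁ x₂ ∪ segment ℝ x₂ x₃)
        + closedBall (0 : EuclideanSpace ℝ (Fin d)) ε)
      ≤ volume ((segment ℝ y₁ y₂ ∪ segment ℝ y₂ y₃)
        + closedBall (0 : EuclideanSpace ℝ (Fin d)) ε) := by
  set B := closedBall (0 : EuclideanSpace ℝ (Fin d)) ε with hB
  rw [Set.union_add, Set.union_add]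
  set K₁ := segment ℝ x₁ x₂ + B with hK₁
  set K₂ := segment ℝ x₂ x₃ + B with hK₂
  set T₁ := segment ℝ y₁ y₂ + B with hT₁
  set T₂ := segment ℝ y₂ y₃ + B with hT₂
  have hK₂c : IsCompact K₂ := (isCompact_segment' x₂ x₃).add (isCompact_closedBall _ _)
  have hT₂c : IsCompact T₂ := (isCompact_segment' y₂ y₃).add (isCompact_closedBall _ _)
  have hBfin : volume B ≠ ⊤ := (isCompact_closedBall _ _).measure_lt_top.ne
  have e1 : volume K₁ = volume T₁ := stadium_vol ε x₁ x₂ y₁ y₂ h₁.symm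
  have e2 : volume K₂ = volume T₂ := stadium_vol ε x₂ x₃ y₂ y₃ h₂.symm
  have hinterY : T₁ ∩ T₂ = closedBall y₂ ε := by
    refine subset_antisymm (inter_subset_ball ε y₁ y₂ y₃ hy) (Set.subset_inter ?_ ?_)
    · exact ball_subset_stadium ε y₁ y₂ y₂ (right_mem_segment ℝ y₁ y₂)
    · exact ball_subset_stadium ε y₂ y₃ y₂ (left_mem_segment ℝ y₂ y₃)
  have hinterX : closedBall x₂ ε ⊆ K₁ ∩ K₂ :=
    Set.subset_inter (ball_subset_stadium ε x₁ x₂ x₂ (right_mem_segment ℝ x₁ x₂))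
      (ball_subset_stadium ε x₂ x₃ x₂ (left_mem_segment ℝ x₂ x₃))
  have hX : volume (K₁ ∪ K₂) + volume (K₁ ∩ K₂) = volume K₁ + volume K₂ :=
    measure_union_add_inter K₁ hK₂c.measurableSet
  have hY : volume (T₁ ∪ T₂) + volume (T₁ ∩ T₂) = volume T₁ + volume T₂ :=
    measure_union_add_inter T₁ hT₂c.measurableSet
  have key : volume (K₁ ∪ K₂) + volume B ≤ volume (T₁ ∪ T₂) + volume B := by
    calc volume (K₁ ∪ K₂) + volume B
        = volume (K₁ ∪ K₂) + volume (closedBall x₂ ε) := by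
          rw [hB, ← vol_closedBall_eq x₂ ε]
      _ ≤ volume (K₁ ∪ K₂) + volume (K₁ ∩ K₂) := add_le_add_right (measure_mono hinterX) _
      _ = volume K₁ + volume K₂ := hX
      _ = volume T₁ + volume T₂ := by rw [e1, e2]
      _ = volume (T₁ ∪ T₂) + volume (T₁ ∩ T₂) := hY.symm
      _ = volume (T₁ ∪ T₂) + volume B := by rw [hinterY, vol_closedBall_eq, hB]
  exact (ENNReal.add_le_add_iff_right hBfin).mp key
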